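/- arXiv:1303.5106 — 2 statements merged into one kernel-verified Lean document; each statement's English description precedes it below -/
import Mathlib

section
/- If V_1 is a free submodule of V such that the restriction of h to V_1 is non-degenerate, then there is a free submodule V_2 of V with V = V_1 ⊥ V_2 (orthogonal direct sum) and the restriction of h to V_2 is non-degenerate. -/
open MulOpposite

instance instIsLocalRingMulOpposite {R : Type*} [Ring R] [IsLocalRing R] :
    IsLocalRing Rᵐᵒᵖ where
  isUnit_or_isUnit_of_add_one {a b} hab := by
    have h1 : unop a + unop b = 1 := by rw [← unop_add, hab, unop_one]
    refine (IsLocalRing.isUnit_or_isUnit_of_add_one h1).imp ?_ ?_ <;>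
      exact fun h => isUnit_unop.mp h

section FreeLemma

set_option linter.unusedSectionVars false

variable {R : Type*} [Ring R] [IsLocalRing R]

/-- prepend a zero -/
private def consMap (n : ℕ) : (Fin n → R) →ₗ[R] (Fin (n + 1) → R) where
  toFun y := Fin.cons 0 y
  map_add' y z := by
    funext i
    refine Fin.cases ?_ (fun j => ?_) i <;> simp
  map_smul' c y := by
    funext i
    refine Fin.cases ?_ (fun j => ?_) i <;> simp

private def restMap (n : ℕ) : (Fin (n + 1) → R) →ₗ[R] (Fin n → R) :=
  LinearMap.funLeft R R Fin.succ

private theorem rest_cons (n : ℕ) (y : Fin n → R) : restMap n (consMap (R := R) n y) = y := by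
  funext i; simp [restMap, consMap, LinearMap.funLeft]

private theorem cons_rest (n : ℕ) (x : Fin (n + 1) → R) :
    consMap (R := R) n (restMap n x) = x - x 0 • (Pi.single 0 1 : Fin (n + 1) → R) := by
  funext i
  refine Fin.cases ?_ (fun j => ?_) i
  · simp [restMap, consMap, LinearMap.funLeft]
  · simp [restMap, consMap, LinearMap.funLeft, Pi.single_eq_of_ne (Fin.succ_ne_zero j)]

private theorem rest_single (n : ℕ) :
    restMap (R := R) n (Pi.single (0 : Fin (n + 1)) (1 : R)) = 0 := by
  funext i
  simp [restMap, LinearMap.funLeft, Pi.single_eq_of_ne (Fin.succ_ne_zero i)]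

private theorem freeRangeOfIdem :
    ∀ (n : ℕ) (f : (Fin n → R) →ₗ[R] (Fin n → R)), f ∘ₗ f = f →
      Module.Free R (LinearMap.range f)
  | 0, f, _ => by
    have : Subsingleton (Fin 0 → R) := ⟨fun a b => funext fun i => i.elim0⟩
    infer_instance
  | (n + 1), f, hf => by
    classical
    set e₀ : Fin (n + 1) → R := Pi.single 0 1 with he₀def
    have he₀0 : e₀ 0 = 1 := Pi.single_eq_same 0 1
    have hf' : ∀ x, f (f x) = f x := fun x => LinearMap.congr_fun hf x
    -- find v with v 0 = 1 and (f v = v ∨ f v = 0)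
    have hsum : f e₀ 0 + (e₀ - f e₀) 0 = 1 := by simp [he₀0]
    obtain ⟨v, hv0, hfv⟩ : ∃ v : Fin (n + 1) → R, v 0 = 1 ∧ (f v = v ∨ f v = 0) := by
      rcases IsLocalRing.isUnit_or_isUnit_of_add_one hsum with hu | hu
      · obtain ⟨u, hu⟩ := hu
        refine ⟨(↑u⁻¹ : R) • f e₀, ?_, Or.inl ?_⟩
        · simp [← hu]
        · rw [map_smul, hf']
      · obtain ⟨u, hu⟩ := hu
        refine ⟨(↑u⁻¹ : R) • (e₀ - f e₀), ?_, Or.inr ?_⟩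
        · simp [← hu]
        · rw [map_smul, map_sub, hf', sub_self, smul_zero]
    set w : Fin (n + 1) → R := v - e₀ with hwdef
    have hw0 : w 0 = 0 := by simp [hwdef, hv0, he₀0]
    let τ : (Fin (n + 1) → R) →ₗ[R] (Fin (n + 1) → R) :=
      { toFun := fun x => x 0 • w
        map_add' := fun x y => by simp [add_smul]
        map_smul' := fun c x => by simp [mul_smul]
      }
    have hττ : ∀ x, τ (τ x) = 0 := fun x => by
      show ((x 0 • w) 0) • w = 0
      simp [hw0]
    let s := LinearMap.id (R := R) (M := Fin (n + 1) → R) - τ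
    let s' := LinearMap.id (R := R) (M := Fin (n + 1) → R) + τ
    have hss' : ∀ x, s (s' x) = x := fun x => by
      simp only [s, s', LinearMap.sub_apply, LinearMap.add_apply, LinearMap.id_apply, map_add]
      rw [hττ]
      abel
    have hs's : ∀ x, s' (s x) = x := fun x => by
      simp only [s, s', LinearMap.sub_apply, LinearMap.add_apply, LinearMap.id_apply, map_sub]
      rw [hττ]
      abel
    set h : (Fin (n + 1) → R) →ₗ[R] (Fin (n + 1) → R) := s ∘ₗ f ∘ₗ s' with hhdef
    have hh' : ∀ x, h (h x) = h x := fun x => by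
      simp only [hhdef, LinearMap.comp_apply]
      rw [hs's, hf']
    have hs'e₀ : s' e₀ = v := by
      show e₀ + e₀ 0 • w = v
      rw [he₀0, one_smul, hwdef]
      abel
    have hhe₀ : h e₀ = e₀ ∨ h e₀ = 0 := by
      rcases hfv with hfv | hfv
      · left
        show s (f (s' e₀)) = e₀
        rw [hs'e₀, hfv]
        show v - v 0 • w = e₀
        rw [hv0, one_smul, hwdef]
        abel
      · right
        show s (f (s' e₀)) = 0
        rw [hs'e₀, hfv, map_zero]
    have hrhe₀ : restMap n (h e₀) = 0 := by
      rcases hhe₀ with hhe | hhe <;> rw [hhe]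
      · exact rest_single n
      · exact map_zero _
    set h'' : (Fin n → R) →ₗ[R] (Fin n → R) := restMap n ∘ₗ h ∘ₗ consMap n with hh''def
    -- key identity
    have hxdec : ∀ x : Fin (n + 1) → R, x = consMap (R := R) n (restMap n x) + x 0 • e₀ := by
      intro x
      rw [cons_rest]
      abel
    have key : ∀ x, restMap n (h x) = h'' (restMap n x) := by
      intro x
      conv_lhs => rw [hxdec x]
      rw [map_add, map_smul, map_add, map_smul, hrhe₀, smul_zero, add_zero]
      rfl
    have hidem'' : h'' ∘ₗ h'' = h'' := by
      apply LinearMap.ext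
      intro y
      show h'' (restMap n (h (consMap n y))) = h'' y
      rw [← key, hh']
      rfl
    have hfree'' : Module.Free R (LinearMap.range h'') := freeRangeOfIdem n h'' hidem''
    -- range h is free
    have hfix : ∀ y ∈ LinearMap.range h, h y = y := by
      rintro y ⟨x, rfl⟩; exact hh' x
    have hfreeh : Module.Free R (LinearMap.range h) := by
      rcases hhe₀ with hhe | hhe
      · -- h e₀ = e₀ : range h ≃ R × range h''
        have hmem : ∀ y : LinearMap.range h, restMap n ↑y ∈ LinearMap.range h'' := by
          rintro ⟨y, x, rfl⟩
          exact ⟨restMap n x, (key x).symm⟩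
        let ψ : LinearMap.range h →ₗ[R] R × LinearMap.range h'' :=
          LinearMap.prod ((LinearMap.proj 0) ∘ₗ (LinearMap.range h).subtype)
            (((restMap n) ∘ₗ (LinearMap.range h).subtype).codRestrict _ hmem)
        have hinj : Function.Injective ψ := by
          intro y z hyz
          have h1 : (↑y : Fin (n + 1) → R) 0 = (↑z : Fin (n + 1) → R) 0 :=
            congrArg Prod.fst hyz
          have h2 : restMap n (↑y : Fin (n + 1) → R) = restMap n (↑z : Fin (n + 1) → R) :=
            congrArg (fun t => ((t : R × LinearMap.range h'').2 : Fin n → R)) hyz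
          apply Subtype.ext
          rw [hxdec (↑y : Fin (n + 1) → R), hxdec (↑z : Fin (n + 1) → R), h1, h2]
        have hsurj : Function.Surjective ψ := by
          rintro ⟨ρ, z, t, rfl⟩
          refine ⟨⟨h (consMap n t) + (ρ - (h (consMap n t)) 0) • e₀, ?_⟩, ?_⟩
          · exact add_mem (LinearMap.mem_range_self h _)
              (Submodule.smul_mem _ _ (by rw [← hhe]; exact LinearMap.mem_range_self h _))
          · refine Prod.ext ?_ (Subtype.ext ?_)
            · show h (consMap n t) 0 + ((ρ - (h (consMap n t)) 0) • e₀) 0 = ρ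
              simp [he₀0]
            · show restMap n (h (consMap n t) + (ρ - (h (consMap n t)) 0) • e₀) = h'' t
              rw [map_add, map_smul, rest_single, smul_zero, add_zero]
              rfl
        haveI := hfree''
        exact Module.Free.of_equiv (LinearEquiv.ofBijective ψ ⟨hinj, hsurj⟩).symm
      · -- h e₀ = 0 : range h ≃ range h''
        have hdet : ∀ y ∈ LinearMap.range h, y = h (consMap n (restMap n y)) := by
          intro y hy
          conv_lhs => rw [← hfix y hy, hxdec y]
          rw [map_add, map_smul, hhe, smul_zero, add_zero]
        have hmem : ∀ y : LinearMap.range h, restMap n ↑y ∈ LinearMap.range h'' := by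
          rintro ⟨y, x, rfl⟩
          exact ⟨restMap n x, (key x).symm⟩
        let ψ : LinearMap.range h →ₗ[R] LinearMap.range h'' :=
          ((restMap n) ∘ₗ (LinearMap.range h).subtype).codRestrict _ hmem
        have hinj : Function.Injective ψ := by
          intro y z hyz
          have h2 : restMap n (↑y : Fin (n + 1) → R) = restMap n (↑z : Fin (n + 1) → R) :=
            congrArg (fun t => ((t : LinearMap.range h'') : Fin n → R)) hyz
          apply Subtype.ext
          rw [hdet _ y.2, hdet _ z.2, h2]
        have hsurj : Function.Surjective ψ := by
          rintro ⟨z, t, rfl⟩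
          refine ⟨⟨h (consMap n t), LinearMap.mem_range_self h _⟩, Subtype.ext ?_⟩
          show restMap n (h (consMap n t)) = h'' t
          rfl
        haveI := hfree''
        exact Module.Free.of_equiv (LinearEquiv.ofBijective ψ ⟨hinj, hsurj⟩).symm
    -- transfer from range h to range f
    have memto : ∀ y : LinearMap.range f, s ↑y ∈ LinearMap.range h := by
      rintro ⟨y, x, rfl⟩
      exact ⟨s x, by simp only [hhdef, LinearMap.comp_apply, hs's]⟩
    have memback : ∀ z : LinearMap.range h, s' ↑z ∈ LinearMap.range f := by
      rintro ⟨z, x, rfl⟩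
      exact ⟨s' x, by simp only [hhdef, LinearMap.comp_apply]; exact (hs's _).symm⟩
    let to1 : LinearMap.range f →ₗ[R] LinearMap.range h :=
      (s ∘ₗ (LinearMap.range f).subtype).codRestrict _ memto
    let to2 : LinearMap.range h →ₗ[R] LinearMap.range f :=
      (s' ∘ₗ (LinearMap.range h).subtype).codRestrict _ memback
    have hbij : Function.Bijective to1 := by
      constructor
      · intro y z hyz
        have h2 : s (↑y : Fin (n + 1) → R) = s (↑z : Fin (n + 1) → R) :=
          congrArg (fun t => ((t : LinearMap.range h) : Fin (n + 1) → R)) hyz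
        apply Subtype.ext
        rw [← hs's (↑y : Fin (n + 1) → R), ← hs's (↑z : Fin (n + 1) → R), h2]
      · intro z
        refine ⟨to2 z, Subtype.ext ?_⟩
        show s (s' ↑z) = ↑z
        exact hss' _
    haveI := hfreeh
    exact Module.Free.of_equiv (LinearEquiv.ofBijective to1 hbij).symm

end FreeLemma


/-- A `*`-hermitian form on a right `A`-module `V` (right modules are encoded as
modules over the opposite ring `Aᵐᵒᵖ`): it is additive and `A`-linear in the second
variable and satisfies `h v u = (h u v)*`. -/
structure HermitianForm (A V : Type*) [Ring A] [StarRing A] [AddCommGroup V]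
    [Module Aᵐᵒᵖ V] where
  toFun : V → V → A
  add_right : ∀ u v w : V, toFun u (v + w) = toFun u v + toFun u w
  smul_right : ∀ (a : A) (u v : V), toFun u (op a • v) = toFun u v * a
  conj_symm : ∀ u v : V, toFun v u = star (toFun u v)

namespace HermitianForm

variable {A V : Type*} [Ring A] [StarRing A] [AddCommGroup V] [Module Aᵐᵒᵖ V]

/-- Non-degeneracy: the map `u ↦ h u -` is a bijection of `V` onto the dual module. -/
def Nondeg (h : HermitianForm A V) : Prop :=
  ∀ φ : V →ₗ[Aᵐᵒᵖ] A, ∃! u : V, ∀ v : V, h.toFun u v = φ v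

end HermitianForm

/-- A vector of the free module `V` of rank `m` is primitive if it belongs to a basis. -/
def IsPrimitive (A : Type*) {V : Type*} [Ring A] [AddCommGroup V] [Module Aᵐᵒᵖ V]
    (m : ℕ) (v : V) : Prop :=
  ∃ (b : Module.Basis (Fin m) Aᵐᵒᵖ V) (i : Fin m), b i = v

namespace HermitianForm

variable {A V : Type*} [Ring A] [StarRing A] [AddCommGroup V] [Module Aᵐᵒᵖ V]
  (h : HermitianForm A V)

theorem zero_right (u : V) : h.toFun u 0 = 0 := by
  have h2 : h.toFun u 0 = h.toFun u 0 + h.toFun u 0 := by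
    have := h.add_right u 0 0
    rwa [add_zero] at this
  exact left_eq_add.mp h2

theorem zero_left (u : V) : h.toFun 0 u = 0 := by
  rw [h.conj_symm, h.zero_right, star_zero]

theorem sub_right (u v w : V) : h.toFun u (v - w) = h.toFun u v - h.toFun u w := by
  have h1 := h.add_right u (v - w) w
  rw [show v - w + w = v by abel] at h1
  exact eq_sub_of_add_eq h1.symm

theorem add_left (u v w : V) : h.toFun (u + v) w = h.toFun u w + h.toFun v w := by
  calc h.toFun (u + v) w = star (h.toFun w (u + v)) := h.conj_symm w (u + v)
    _ = star (h.toFun w u + h.toFun w v) := by rw [h.add_right]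
    _ = star (h.toFun w u) + star (h.toFun w v) := star_add _ _
    _ = h.toFun u w + h.toFun v w := by rw [← h.conj_symm w u, ← h.conj_symm w v]

theorem sub_left (u v w : V) : h.toFun (u - v) w = h.toFun u w - h.toFun v w := by
  calc h.toFun (u - v) w = star (h.toFun w (u - v)) := h.conj_symm w (u - v)
    _ = star (h.toFun w u - h.toFun w v) := by rw [h.sub_right]
    _ = star (h.toFun w u) - star (h.toFun w v) := star_sub _ _
    _ = h.toFun u w - h.toFun v w := by rw [← h.conj_symm w u, ← h.conj_symm w v]

theorem smul_right' (c : Aᵐᵒᵖ) (u v : V) :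
    h.toFun u (c • v) = h.toFun u v * MulOpposite.unop c := by
  have := h.smul_right (MulOpposite.unop c) u v
  rwa [MulOpposite.op_unop] at this

theorem smul_left (c : Aᵐᵒᵖ) (u v : V) :
    h.toFun (c • u) v = star (MulOpposite.unop c) * h.toFun u v := by
  calc h.toFun (c • u) v = star (h.toFun v (c • u)) := h.conj_symm v (c • u)
    _ = star (h.toFun v u * MulOpposite.unop c) := by rw [h.smul_right' c]
    _ = star (MulOpposite.unop c) * star (h.toFun v u) := star_mul _ _
    _ = star (MulOpposite.unop c) * h.toFun u v := by rw [← h.conj_symm v u]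

end HermitianForm


/-- Lemma 2.3(b): if the restriction of `h` to a free submodule `V₁` is
non-degenerate, then `V = V₁ ⊥ V₂` for some free submodule `V₂` on which the
restriction of `h` is again non-degenerate. -/
theorem stmt_3 {A V : Type*} [Ring A] [StarRing A] [IsLocalRing A]
    [AddCommGroup V] [Module Aᵐᵒᵖ V]
    (hcent : ∀ a : A, star a = a → a ∈ Set.center A)
    (d : A) (hd : d + star d = 1)
    (m : ℕ) (hm : 1 ≤ m) (b : Module.Basis (Fin m) Aᵐᵒᵖ V)
    (h : HermitianForm A V) (hnd : h.Nondeg)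
    (V₁ : Submodule Aᵐᵒᵖ V) [Module.Free Aᵐᵒᵖ V₁]
    (hnd1 : ∀ φ : V₁ →ₗ[Aᵐᵒᵖ] A, ∃! u : V₁, ∀ v : V₁, h.toFun u v = φ v) :
    ∃ V₂ : Submodule Aᵐᵒᵖ V, Module.Free Aᵐᵒᵖ V₂ ∧
      V₁ ⊔ V₂ = ⊤ ∧ V₁ ⊓ V₂ = ⊥ ∧
      (∀ u ∈ V₁, ∀ v ∈ V₂, h.toFun u v = 0) ∧
      (∀ φ : V₂ →ₗ[Aᵐᵒᵖ] A, ∃! u : V₂, ∀ v : V₂, h.toFun u v = φ v) := by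
  classical
  -- the linear functional on `V₁` attached to `v : V`
  let φv : V → (V₁ →ₗ[Aᵐᵒᵖ] A) := fun v =>
    { toFun := fun u₁ => h.toFun v ↑u₁
      map_add' := fun x y => by
        show h.toFun v ↑(x + y) = h.toFun v ↑x + h.toFun v ↑y
        rw [Submodule.coe_add, h.add_right]
      map_smul' := fun c x => by
        show h.toFun v ↑(c • x) = (RingHom.id Aᵐᵒᵖ) c • h.toFun v ↑x
        rw [Submodule.coe_smul, h.smul_right' c, RingHom.id_apply,
          MulOpposite.smul_eq_mul_unop] }
  -- the projection onto V₁
  have hp : ∀ v : V, ∃ q : V₁, ∀ u₁ : V₁, h.toFun ↑q ↑u₁ = h.toFun v ↑u₁ := fun v =>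
    ((hnd1 (φv v)).exists).imp fun q hq u₁ => hq u₁
  let p : V → V₁ := fun v => (hp v).choose
  have hps : ∀ (v : V) (u₁ : V₁), h.toFun ↑(p v) ↑u₁ = h.toFun v ↑u₁ := fun v =>
    (hp v).choose_spec
  have punique : ∀ (v : V) (q : V₁), (∀ u₁ : V₁, h.toFun ↑q ↑u₁ = h.toFun v ↑u₁) →
      q = p v := by
    intro v q hq
    exact (hnd1 (φv v)).unique (fun u₁ => hq u₁) (fun u₁ => hps v u₁)
  -- the orthogonal complement of V₁
  let V₂ : Submodule Aᵐᵒᵖ V :=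
    { carrier := {w : V | ∀ u ∈ V₁, h.toFun u w = 0}
      add_mem' := fun {x y} hx hy u hu => by rw [h.add_right, hx u hu, hy u hu, add_zero]
      zero_mem' := fun u _ => h.zero_right u
      smul_mem' := fun c w hw u hu => by
        rw [← MulOpposite.op_unop c, h.smul_right, hw u hu, zero_mul] }
  have hmemV₂ : ∀ w : V, w ∈ V₂ ↔ ∀ u ∈ V₁, h.toFun u w = 0 := fun w => Iff.rfl
  have hqmem : ∀ v : V, v - ↑(p v) ∈ V₂ := by
    intro v
    rw [hmemV₂]
    intro u hu
    have h2 : h.toFun (↑(p v) : V) u = h.toFun v u := hps v ⟨u, hu⟩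
    calc h.toFun u (v - ↑(p v)) = h.toFun u v - h.toFun u ↑(p v) := h.sub_right u v _
      _ = star (h.toFun v u) - star (h.toFun (↑(p v) : V) u) := by
          rw [← h.conj_symm v u, ← h.conj_symm (↑(p v) : V) u]
      _ = 0 := by rw [h2, sub_self]
  have pfix : ∀ x : V₁, p ↑x = x := fun x => (punique ↑x x (fun u₁ => rfl)).symm
  have pzero : ∀ w : V, w ∈ V₂ → p w = 0 := by
    intro w hw
    refine (punique w 0 ?_).symm
    intro u₁
    rw [Submodule.coe_zero, h.zero_left, h.conj_symm (↑u₁ : V) w, hw ↑u₁ u₁.2, star_zero]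
  -- `p` as a linear map and the complementary projection
  let P : V →ₗ[Aᵐᵒᵖ] V :=
    { toFun := fun v => ↑(p v)
      map_add' := fun v w => by
        show (↑(p (v + w)) : V) = ↑(p v) + ↑(p w)
        have hpvw : p (v + w) = p v + p w := by
          refine (punique (v + w) (p v + p w) ?_).symm
          intro u₁
          rw [Submodule.coe_add, h.add_left, hps, hps, ← h.add_left]
        rw [hpvw, Submodule.coe_add]
      map_smul' := fun c v => by
        show (↑(p (c • v)) : V) = (RingHom.id Aᵐᵒᵖ) c • ↑(p v)
        have hpcv : p (c • v) = c • p v := by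
          refine (punique (c • v) (c • p v) ?_).symm
          intro u₁
          rw [Submodule.coe_smul, h.smul_left, hps, ← h.smul_left]
        rw [RingHom.id_apply, hpcv, Submodule.coe_smul] }
  let π : V →ₗ[Aᵐᵒᵖ] V := LinearMap.id - P
  have hπ : ∀ v : V, π v = v - ↑(p v) := fun v => rfl
  have hπmem : ∀ v : V, π v ∈ V₂ := fun v => hqmem v
  have hπfix : ∀ w ∈ V₂, π w = w := fun w hw => by
    rw [hπ, pzero w hw, Submodule.coe_zero, sub_zero]
  let qV₂ : V →ₗ[Aᵐᵒᵖ] V₂ := LinearMap.codRestrict V₂ π hπmem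
  have hqV₂ : ∀ v : V, (qV₂ v : V) = v - ↑(p v) := fun v => rfl
  -- V₁ ⊔ V₂ = ⊤
  have hsup : V₁ ⊔ V₂ = ⊤ := by
    rw [eq_top_iff]
    intro v _
    have hmem := Submodule.add_mem_sup (p v).2 (hqmem v)
    simpa using hmem
  -- V₁ ⊓ V₂ = ⊥
  have hinf : V₁ ⊓ V₂ = ⊥ := by
    rw [eq_bot_iff]
    rintro v ⟨hv1, hv2⟩
    have h1 : p v = ⟨v, hv1⟩ := (punique v ⟨v, hv1⟩ (fun u₁ => rfl)).symm
    have h2 : p v = 0 := pzero v hv2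
    rw [Submodule.mem_bot]
    simpa using congrArg Subtype.val (h1.symm.trans h2)
  -- orthogonality
  have horth : ∀ u ∈ V₁, ∀ v ∈ V₂, h.toFun u v = 0 := fun u hu v hv => hv u hu
  -- non-degeneracy on V₂
  have hnd2 : ∀ φ : V₂ →ₗ[Aᵐᵒᵖ] A, ∃! u : V₂, ∀ v : V₂, h.toFun ↑u ↑v = φ v := by
    intro φ
    obtain ⟨u, hu, huniq⟩ := hnd (φ ∘ₗ qV₂)
    have humem : u ∈ V₂ := by
      rw [hmemV₂]
      intro u₁ hu₁
      have h1 : h.toFun u u₁ = φ (qV₂ u₁) := hu u₁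
      have h2 : qV₂ u₁ = 0 := by
        apply Subtype.ext
        rw [hqV₂, Submodule.coe_zero]
        have hpu : p u₁ = ⟨u₁, hu₁⟩ := (punique u₁ ⟨u₁, hu₁⟩ (fun _ => rfl)).symm
        rw [hpu]
        exact sub_self u₁
      rw [h.conj_symm u u₁, h1, h2, map_zero, star_zero]
    refine ⟨⟨u, humem⟩, ?_, ?_⟩
    · intro v₂
      show h.toFun u ↑v₂ = φ v₂
      have h1 : h.toFun u ↑v₂ = φ (qV₂ ↑v₂) := hu ↑v₂
      have h2 : qV₂ (↑v₂ : V) = v₂ := by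
        apply Subtype.ext
        rw [hqV₂, pzero ↑v₂ v₂.2, Submodule.coe_zero, sub_zero]
      rw [h1, h2]
    · intro y hy
      apply Subtype.ext
      refine huniq ↑y ?_
      intro v
      have e1 : h.toFun ↑y ↑(p v) = 0 := by
        rw [h.conj_symm (↑(p v) : V) ↑y, y.2 ↑(p v) (p v).2, star_zero]
      have e2 : h.toFun ↑y (v - ↑(p v)) = φ (qV₂ v) := by
        have hq : qV₂ v = ⟨v - ↑(p v), hqmem v⟩ := rfl
        rw [hq]
        exact hy ⟨v - ↑(p v), hqmem v⟩
      calc h.toFun ↑y v = h.toFun ↑y (↑(p v) + (v - ↑(p v))) := by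
            rw [show (↑(p v) : V) + (v - ↑(p v)) = v by abel]
        _ = 0 + φ (qV₂ v) := by rw [h.add_right, e1, e2]
        _ = (φ ∘ₗ qV₂) v := by rw [zero_add]; rfl
  -- freeness of V₂
  have hfree : Module.Free Aᵐᵒᵖ V₂ := by
    let e := b.equivFun
    let f : (Fin m → Aᵐᵒᵖ) →ₗ[Aᵐᵒᵖ] (Fin m → Aᵐᵒᵖ) :=
      e.toLinearMap ∘ₗ π ∘ₗ e.symm.toLinearMap
    have hfapp : ∀ x, f x = e (π (e.symm x)) := fun x => rfl
    have hfidem : f ∘ₗ f = f := by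
      apply LinearMap.ext
      intro x
      show e (π (e.symm (e (π (e.symm x))))) = e (π (e.symm x))
      rw [LinearEquiv.symm_apply_apply]
      exact congrArg e (hπfix _ (hπmem _))
    have hfree_range : Module.Free Aᵐᵒᵖ (LinearMap.range f) := freeRangeOfIdem m f hfidem
    have memto : ∀ x : V₂, e ↑x ∈ LinearMap.range f := by
      intro x
      refine ⟨e ↑x, ?_⟩
      rw [hfapp, LinearEquiv.symm_apply_apply, hπfix ↑x x.2]
    let to1 : V₂ →ₗ[Aᵐᵒᵖ] LinearMap.range f :=
      LinearMap.codRestrict (LinearMap.range f) (e.toLinearMap ∘ₗ V₂.subtype) memto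
    have memback : ∀ z : LinearMap.range f, e.symm ↑z ∈ V₂ := by
      rintro ⟨z, x, rfl⟩
      show e.symm (f x) ∈ V₂
      rw [hfapp, LinearEquiv.symm_apply_apply]
      exact hπmem _
    have hbij : Function.Bijective to1 := by
      constructor
      · intro x y hxy
        apply Subtype.ext
        apply e.injective
        exact congrArg (fun t : LinearMap.range f => (t : Fin m → Aᵐᵒᵖ)) hxy
      · intro z
        refine ⟨⟨e.symm ↑z, memback z⟩, Subtype.ext ?_⟩
        show e (e.symm ↑z) = ↑z
        exact e.apply_symm_apply ↑z
    exact Module.Free.of_equiv' hfree_range (LinearEquiv.ofBijective to1 hbij).symm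
  exact ⟨V₂, hfree, hsup, hinf, horth, hnd2⟩
end

section
/- Suppose additionally that the squaring map on 1 + m (the 1-units of R) is surjective and R/m is a finite field of odd order q. If the involution induced by * on the division ring A/r is the identity, then the norm map Q : A* → R*, a ↦ aa*, is not surjective and A/r ≅ F_q; if the induced involution is not the identity, then A/r is commutative, Q is surjective, and A/r ≅ F_{q^2}. -/
set_option linter.unusedSectionVars false
set_option maxHeartbeats 1000000

section LocalNC
variable {A : Type*} [Ring A] [IsLocalRing A]

theorem auxNC_isUnit_or {a b : A} (h : IsUnit (a + b)) : IsUnit a ∨ IsUnit b := by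
  rcases h with ⟨u, hu⟩
  have h1 : (↑u⁻¹ * a) + (↑u⁻¹ * b) = 1 := by
    rw [← mul_add, ← hu, Units.inv_mul]
  rcases IsLocalRing.isUnit_or_isUnit_of_add_one h1 with h | h
  · left
    have := u.isUnit.mul h
    rwa [Units.mul_inv_cancel_left] at this
  · right
    have := u.isUnit.mul h
    rwa [Units.mul_inv_cancel_left] at this

theorem auxNC_nonunits_add {a b : A} (ha : a ∈ nonunits A) (hb : b ∈ nonunits A) :
    a + b ∈ nonunits A := fun H => not_or_intro ha hb (auxNC_isUnit_or H)

theorem auxNC_mul_left (a : A) {x : A} (hx : x ∈ nonunits A) : a * x ∈ nonunits A := by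
  intro h
  rcases h with ⟨u, hu⟩
  set b : A := ↑u⁻¹ * a with hb
  have hbx : b * x = 1 := by rw [hb, mul_assoc, ← hu, Units.inv_mul]
  have hidem : (x * b) * (x * b) = (x * b) * 1 := by
    rw [mul_assoc, ← mul_assoc b, hbx, one_mul, mul_one]
  have hsum : (x * b) + (1 - x * b) = 1 := by abel
  rcases auxNC_isUnit_or (hsum ▸ isUnit_one) with h1 | h1
  · have hxb : x * b = 1 := h1.mul_left_cancel hidem
    exact hx ⟨⟨x, b, hxb, hbx⟩, rfl⟩
  · have hx0 : x = 0 := h1.mul_left_cancel (show (1 - x*b) * x = (1 - x*b) * 0 by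
      rw [mul_zero, sub_mul, one_mul, mul_assoc, hbx, mul_one, sub_self])
    rw [hx0, mul_zero] at hu
    exact zero_ne_one (isUnit_zero_iff.mp ⟨u, hu⟩ : (0:A) = 1)

theorem auxNC_mul_right (a : A) {x : A} (hx : x ∈ nonunits A) : x * a ∈ nonunits A := by
  intro h
  rcases h with ⟨u, hu⟩
  set b : A := a * ↑u⁻¹ with hb
  have hxb : x * b = 1 := by rw [hb, ← mul_assoc, ← hu, Units.mul_inv]
  have hidem : (b * x) * (b * x) = 1 * (b * x) := by
    rw [mul_assoc, ← mul_assoc x, hxb, one_mul, one_mul]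
  have hsum : (b * x) + (1 - b * x) = 1 := by abel
  rcases auxNC_isUnit_or (hsum ▸ isUnit_one) with h1 | h1
  · have hbx : b * x = 1 := h1.mul_right_cancel hidem
    exact hx ⟨⟨x, b, hxb, hbx⟩, rfl⟩
  · have hx0 : x = 0 := h1.mul_right_cancel (show x * (1 - b*x) = 0 * (1 - b*x) by
      rw [zero_mul, mul_sub, mul_one, ← mul_assoc, hxb, one_mul, sub_self])
    rw [hx0, zero_mul] at hu
    exact zero_ne_one (isUnit_zero_iff.mp ⟨u, hu⟩ : (0:A) = 1)

omit [IsLocalRing A] in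
theorem auxNC_neg {x : A} (hx : x ∈ nonunits A) : -x ∈ nonunits A := by
  simpa [nonunits] using hx

theorem auxNC_sub {a b : A} (ha : a ∈ nonunits A) (hb : b ∈ nonunits A) :
    a - b ∈ nonunits A := by
  rw [sub_eq_add_neg]; exact auxNC_nonunits_add ha (auxNC_neg hb)

theorem auxNC_zero_prod {a b : A} (h : a * b = 0) : a ∈ nonunits A ∨ b ∈ nonunits A := by
  by_cases ha : IsUnit a
  · refine Or.inr fun hb => ?_
    have := ha.mul hb
    rw [h] at this
    exact zero_ne_one (isUnit_zero_iff.mp this)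
  · exact Or.inl ha

theorem auxNC_unit_mul_mem {u x : A} (hu : IsUnit u) (h : u * x ∈ nonunits A) :
    x ∈ nonunits A := by
  rcases hu with ⟨v, rfl⟩
  have := auxNC_mul_left (↑v⁻¹ : A) h
  rwa [← mul_assoc, Units.inv_mul, one_mul] at this

theorem auxNC_mul_unit_mem {u x : A} (hu : IsUnit u) (h : x * u ∈ nonunits A) :
    x ∈ nonunits A := by
  rcases hu with ⟨v, rfl⟩
  have := auxNC_mul_right (↑v⁻¹ : A) h
  rwa [mul_assoc, Units.mul_inv, mul_one] at this

end LocalNC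


section ResAux
open IsLocalRing Polynomial
variable {R : Type*} [CommRing R] [IsLocalRing R] [Finite (ResidueField R)]

/-- `d` is a non-square modulo the maximal ideal. -/
def NSq (R : Type*) [CommRing R] [IsLocalRing R] (d : R) : Prop :=
  ∀ f : R, d - f * f ∉ IsLocalRing.maximalIdeal R

theorem NSq_iff (d : R) : NSq R d ↔ ¬ IsSquare (residue R d) := by
  constructor
  · rintro h ⟨x, hx⟩
    obtain ⟨f, hf⟩ := IsLocalRing.residue_surjective (R := R) x
    refine h f ?_
    rw [← IsLocalRing.residue_eq_zero_iff, map_sub, map_mul, hf, ← hx, sub_self]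
  · rintro h f hf
    exact h ⟨residue R f, by
      rw [← sub_eq_zero, ← map_mul, ← map_sub, IsLocalRing.residue_eq_zero_iff]; exact hf⟩

theorem res_ne_zero_of_isUnit {d : R} (h : IsUnit d) : residue R d ≠ 0 :=
  (IsLocalRing.residue_ne_zero_iff_isUnit d).mpr h

variable (hodd : Odd (Nat.card (ResidueField R)))
include hodd

theorem resaux_char2 : ringChar (ResidueField R) ≠ 2 := by
  letI := Fintype.ofFinite (ResidueField R)
  intro h
  have := FiniteField.even_card_iff_char_two.mp h
  rw [← Nat.card_eq_fintype_card] at this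
  rw [Nat.odd_iff, this] at hodd
  exact absurd hodd (by norm_num)

/-- product of two non-squares is a square times a unit -/
theorem nonsq_ratio {d e : R} (hd : NSq R d) (he : NSq R e)
    (hdu : IsUnit d) (heu : IsUnit e) :
    ∃ μ : R, IsUnit μ ∧ d - μ * μ * e ∈ maximalIdeal R := by
  classical
  letI := Fintype.ofFinite (ResidueField R)
  set k := ResidueField R
  have hd0 : residue R d ≠ 0 := res_ne_zero_of_isUnit hdu
  have he0 : residue R e ≠ 0 := res_ne_zero_of_isUnit heu
  have hchar := resaux_char2 (R := R) hodd
  have hdχ : quadraticChar k (residue R d) = -1 :=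
    quadraticChar_neg_one_iff_not_isSquare.mpr ((NSq_iff d).mp hd)
  have heχ : quadraticChar k (residue R e) = -1 :=
    quadraticChar_neg_one_iff_not_isSquare.mpr ((NSq_iff e).mp he)
  have hprod : IsSquare (residue R d * (residue R e)⁻¹) := by
    have h1 : IsSquare (residue R d * residue R e) := by
      rw [← quadraticChar_one_iff_isSquare (mul_ne_zero hd0 he0), map_mul, hdχ, heχ]
      norm_num
    have h2 : residue R d * (residue R e)⁻¹
        = (residue R d * residue R e) * ((residue R e)⁻¹ * (residue R e)⁻¹) := by
      field_simp
    rw [h2]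
    exact h1.mul ⟨(residue R e)⁻¹, rfl⟩
  obtain ⟨x, hx⟩ := hprod
  obtain ⟨μ, hμ⟩ := IsLocalRing.residue_surjective (R := R) x
  have hx0 : x ≠ 0 := by
    intro h0; rw [h0, mul_zero] at hx
    exact mul_ne_zero hd0 (inv_ne_zero he0) hx
  refine ⟨μ, (IsLocalRing.residue_ne_zero_iff_isUnit μ).mp (by rw [hμ]; exact hx0), ?_⟩
  rw [← IsLocalRing.residue_eq_zero_iff, map_sub, map_mul, map_mul, hμ, ← hx]
  field_simp
  ring

/-- In the residue field there is a nonsquare; lift it. -/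
theorem nonsq_exists : ∃ r : R, IsUnit r ∧ NSq R r := by
  classical
  letI := Fintype.ofFinite (ResidueField R)
  obtain ⟨x, hx⟩ := FiniteField.exists_nonsquare (F := ResidueField R) (resaux_char2 hodd)
  obtain ⟨r, hr⟩ := IsLocalRing.residue_surjective (R := R) x
  have hx0 : x ≠ 0 := fun h => hx (h ▸ ⟨0, by simp⟩)
  exact ⟨r, (IsLocalRing.residue_ne_zero_iff_isUnit r).mp (hr ▸ hx0),
    (NSq_iff r).mpr (hr ▸ hx)⟩

omit hodd in
theorem exact_scale (hsq : ∀ x ∈ IsLocalRing.maximalIdeal R,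
      ∃ y ∈ IsLocalRing.maximalIdeal R, (1 + y) ^ 2 = 1 + x)
    (a b : R) (hb : IsUnit b) (h : a - b ∈ maximalIdeal R) :
    ∃ w : R, IsUnit w ∧ w * w * a = b := by
  obtain ⟨bi, hbi⟩ := hb.exists_right_inv
  have hmem : a * bi - 1 ∈ maximalIdeal R := by
    have e : a * bi - 1 = (a - b) * bi := by linear_combination hbi
    rw [e]
    exact Ideal.mul_mem_right _ _ h
  obtain ⟨y, hy, hy2⟩ := hsq _ hmem
  have hz : (1 + y) * (1 + y) = a * bi := by
    have := hy2
    rw [add_sub_cancel] at this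
    rw [← pow_two, this]
  have hzu : IsUnit (1 + y) := by
    rw [← IsLocalRing.residue_ne_zero_iff_isUnit, map_add, map_one,
      (IsLocalRing.residue_eq_zero_iff y).mpr hy, add_zero]
    exact one_ne_zero
  obtain ⟨zi, hzi⟩ := hzu.exists_right_inv
  refine ⟨zi, IsUnit.of_mul_eq_one (a := zi) (1+y) (by rw [mul_comm]; exact hzi), ?_⟩
  have h1 : zi * zi * ((1+y)*(1+y)) = 1 := by
    linear_combination ((1+y)*zi + 1) * hzi
  calc zi * zi * a = zi * zi * (a * bi) * b := by linear_combination (-(zi*zi*a)) * hbi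
    _ = zi * zi * ((1+y)*(1+y)) * b := by rw [← hz]
    _ = b := by rw [h1, one_mul]

theorem neg_one_cases (hsq : ∀ x ∈ IsLocalRing.maximalIdeal R,
      ∃ y ∈ IsLocalRing.maximalIdeal R, (1 + y) ^ 2 = 1 + x)
    {d : R} (hd : NSq R d) (hdu : IsUnit d) :
    (∃ ζ : R, ζ * ζ = -1) ∨ (∃ ζ : R, d * (ζ * ζ) = -1) := by
  classical
  letI := Fintype.ofFinite (ResidueField R)
  set k := ResidueField R
  have hchar := resaux_char2 (R := R) hodd
  have hd0 : residue R d ≠ 0 := res_ne_zero_of_isUnit hdu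
  by_cases hs : IsSquare (-1 : k)
  · left
    obtain ⟨x, hx⟩ := hs
    obtain ⟨α, hα⟩ := IsLocalRing.residue_surjective (R := R) x
    have hmem : α * α - (-1) ∈ maximalIdeal R := by
      rw [← IsLocalRing.residue_eq_zero_iff, map_sub, map_mul, hα, map_neg, map_one,
        ← hx, sub_self]
    obtain ⟨w, hwu, hw⟩ := exact_scale hsq (α*α) (-1)
      (IsUnit.neg isUnit_one) hmem
    exact ⟨w * α, by rw [← hw]; ring⟩
  · right
    have hds : IsSquare (-(residue R d)⁻¹) := by
      have hχd : quadraticChar k (residue R d) = -1 :=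
        quadraticChar_neg_one_iff_not_isSquare.mpr ((NSq_iff d).mp hd)
      have hχn : quadraticChar k (-1) = -1 :=
        quadraticChar_neg_one_iff_not_isSquare.mpr hs
      have hne : (-(residue R d)⁻¹ : k) ≠ 0 := by
        simpa using inv_ne_zero hd0
      rw [← quadraticChar_one_iff_isSquare hne]
      have : (-(residue R d)⁻¹ : k) = (-1) * (residue R d) * ((residue R d)⁻¹ * (residue R d)⁻¹) := by
        field_simp
      rw [this, map_mul, map_mul, hχn, hχd]
      have : quadraticChar k ((residue R d)⁻¹ * (residue R d)⁻¹) = 1 := by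
        rw [map_mul]
        rcases quadraticChar_dichotomy (F := k) (inv_ne_zero hd0) with h | h <;>
          rw [h] <;> norm_num
      rw [this]; norm_num
    obtain ⟨x, hx⟩ := hds
    obtain ⟨β, hβ⟩ := IsLocalRing.residue_surjective (R := R) x
    have hmem : d * (β * β) - (-1) ∈ maximalIdeal R := by
      rw [← IsLocalRing.residue_eq_zero_iff, map_sub, map_mul, map_mul, hβ, ← hx,
        map_neg, map_one]
      field_simp
      ring
    obtain ⟨w, hwu, hw⟩ := exact_scale hsq (d * (β*β)) (-1) (IsUnit.neg isUnit_one) hmem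
    exact ⟨w * β, by rw [← hw]; ring⟩

theorem sum_sq : ∃ x y : R, x * x + y * y + 1 ∈ maximalIdeal R := by
  classical
  letI := Fintype.ofFinite (ResidueField R)
  set k := ResidueField R
  have hcard : Fintype.card k % 2 = 1 := by
    rw [← Nat.card_eq_fintype_card, ← Nat.odd_iff]; exact hodd
  obtain ⟨a, b, hab⟩ := FiniteField.exists_root_sum_quadratic
    (f := (Polynomial.X ^ 2 : Polynomial k)) (g := Polynomial.X ^ 2 + Polynomial.C 1)
    (Polynomial.degree_X_pow 2) (by
      simpa using Polynomial.degree_X_pow_add_C (by norm_num : 0 < 2) (1 : k)) hcard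
  simp only [Polynomial.eval_add, Polynomial.eval_pow, Polynomial.eval_X,
    Polynomial.eval_C] at hab
  obtain ⟨x, hx⟩ := IsLocalRing.residue_surjective (R := R) a
  obtain ⟨y, hy⟩ := IsLocalRing.residue_surjective (R := R) b
  refine ⟨x, y, ?_⟩
  rw [← IsLocalRing.residue_eq_zero_iff, map_add, map_add, map_mul, map_mul, map_one,
    hx, hy, ← pow_two, ← pow_two]
  linear_combination hab

theorem solve_norm {d : R} (hdu : IsUnit d) (u : R) :
    ∃ r s : R, r * r - d * (s * s) - u ∈ maximalIdeal R := by
  classical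
  letI := Fintype.ofFinite (ResidueField R)
  set k := ResidueField R
  have hcard : Fintype.card k % 2 = 1 := by
    rw [← Nat.card_eq_fintype_card, ← Nat.odd_iff]; exact hodd
  have hd0 : (residue R d : k) ≠ 0 := res_ne_zero_of_isUnit hdu
  set D := (residue R d : k)
  set U := (residue R u : k)
  obtain ⟨a, b, hab⟩ := FiniteField.exists_root_sum_quadratic
    (f := Polynomial.C D⁻¹ * Polynomial.X ^ 2)
    (g := -(Polynomial.X ^ 2 + Polynomial.C (D⁻¹ * U)))
    (by rw [Polynomial.degree_C_mul_X_pow 2 (inv_ne_zero hd0)]; rfl)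
    (by rw [Polynomial.degree_neg]
        simpa using Polynomial.degree_X_pow_add_C (by norm_num : 0 < 2) (D⁻¹ * U)) hcard
  simp only [Polynomial.eval_mul, Polynomial.eval_neg, Polynomial.eval_add,
    Polynomial.eval_pow, Polynomial.eval_X, Polynomial.eval_C] at hab
  obtain ⟨r, hr⟩ := IsLocalRing.residue_surjective (R := R) a
  obtain ⟨s, hs⟩ := IsLocalRing.residue_surjective (R := R) b
  refine ⟨r, s, ?_⟩
  rw [← IsLocalRing.residue_eq_zero_iff]
  have : residue R (r * r - d * (s * s) - u) = D * (D⁻¹ * a^2 + -(b^2 + D⁻¹ * U)) := by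
    rw [map_sub, map_sub, map_mul, map_mul, map_mul, hr, hs]
    field_simp
    ring
  rw [this, hab, mul_zero]

end ResAux

structure PCtx (A R : Type*) [Ring A] [StarRing A] [IsLocalRing A]
    [CommRing R] [IsLocalRing R] [Algebra R A] : Prop where
  hcent : ∀ a : A, star a = a → a ∈ Set.center A
  h2 : IsUnit (2 : A)
  hinj : Function.Injective (algebraMap R A)
  hfix : ∀ a : A, star a = a ↔ a ∈ Set.range (algebraMap R A)

namespace PCtx
variable {A R : Type*} [Ring A] [StarRing A] [IsLocalRing A]
    [CommRing R] [IsLocalRing R] [Algebra R A] (C : PCtx A R)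
include C

theorem star_aM (r : R) : star (algebraMap R A r) = algebraMap R A r :=
  (C.hfix _).mpr ⟨r, rfl⟩

theorem comm (r : R) (a : A) : algebraMap R A r * a = a * algebraMap R A r :=
  (Semigroup.mem_center_iff.mp (C.hcent _ (C.star_aM r)) a).symm

theorem isUnit_of_aM {r : R} (h : IsUnit ((algebraMap R A) r)) : IsUnit r := by
  rcases h with ⟨u, hu⟩
  set b : A := ↑u⁻¹ with hbdef
  have h1 : algebraMap R A r * b = 1 := by rw [hbdef, ← hu, Units.mul_inv]
  have h2 : b * algebraMap R A r = 1 := by rw [hbdef, ← hu, Units.inv_mul]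
  have hsb : star b = b := by
    have e1 : star b * algebraMap R A r = 1 := by
      have := congrArg star h1
      rwa [star_mul, C.star_aM, star_one] at this
    calc star b = star b * (algebraMap R A r * b) := by rw [h1, mul_one]
    _ = (star b * algebraMap R A r) * b := by rw [mul_assoc]
    _ = b := by rw [e1, one_mul]
  obtain ⟨s, hs⟩ := (C.hfix b).mp hsb
  refine IsUnit.of_mul_eq_one (a := r) s (C.hinj ?_)
  rw [map_mul, map_one, hs, h1]

theorem aM_nonunits {r : R} (h : algebraMap R A r ∈ nonunits A) :
    r ∈ IsLocalRing.maximalIdeal R :=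
  fun hr => h (hr.map (algebraMap R A))

theorem nonunits_aM {r : R} (h : r ∈ IsLocalRing.maximalIdeal R) :
    algebraMap R A r ∈ nonunits A :=
  fun hr => h (C.isUnit_of_aM hr)

theorem isUnit_two : IsUnit (2 : R) := by
  apply C.isUnit_of_aM (r := 2)
  rw [map_ofNat]
  exact C.h2

theorem star_nonunits {x : A} (h : x ∈ nonunits A) : star x ∈ nonunits A :=
  fun hx => h (isUnit_star.mp hx)

/-- decomposition into symmetric (from `R`) + antisymmetric part -/
theorem decomp (a : A) : ∃ (r : R) (t : A), star t = -t ∧ a = algebraMap R A r + t := by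
  obtain ⟨h, hh⟩ := C.isUnit_two.exists_right_inv
  set c : A := algebraMap R A h with hc
  have hsym : star (c * (a + star a)) = c * (a + star a) := by
    rw [star_mul, hc, C.star_aM, star_add, star_star, ← C.comm, add_comm]
  obtain ⟨r, hr⟩ := (C.hfix _).mp hsym
  refine ⟨r, c * (a - star a), ?_, ?_⟩
  · rw [star_mul, hc, C.star_aM, star_sub, star_star, ← C.comm, mul_sub, mul_sub, neg_sub]
  · rw [hr, ← mul_add]
    have : (a + star a) + (a - star a) = 2 * a := by rw [two_mul]; abel
    rw [this, ← mul_assoc, hc, ← map_ofNat (algebraMap R A) 2, ← map_mul,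
      mul_comm h 2, hh, map_one, one_mul]

theorem two_cancel {x : A} (h : 2 * x ∈ nonunits A) : x ∈ nonunits A :=
  auxNC_unit_mul_mem C.h2 h

theorem antisym_not_res {v : A} (hv : star v = -v) (hvu : IsUnit v) (r : R) :
    v - algebraMap R A r ∉ nonunits A := by
  intro h
  have h2 : star (v - algebraMap R A r) ∈ nonunits A := C.star_nonunits h
  rw [star_sub, hv, C.star_aM] at h2
  have h3 : (v - algebraMap R A r) - (-v - algebraMap R A r) ∈ nonunits A := auxNC_sub h h2
  have h4 : (v - algebraMap R A r) - (-v - algebraMap R A r) = 2 * v := by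
    rw [two_mul]; abel
  rw [h4] at h3
  exact (C.two_cancel h3) hvu

theorem mulmul (x y : R) (a b : A) :
    (algebraMap R A x * a) * (algebraMap R A y * b) = algebraMap R A (x*y) * (a*b) := by
  rw [map_mul, mul_assoc, ← mul_assoc a, ← C.comm y a, mul_assoc, ← mul_assoc, ← mul_assoc]

theorem sym_sq {v : A} (hv : star v = -v) : ∃ e : R, algebraMap R A e = v * v := by
  have h : star (v*v) = v*v := by rw [star_mul, hv, neg_mul_neg]
  exact (C.hfix _).mp h

theorem star_smul_antisym {v : A} (hv : star v = -v) (b : R) :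
    star (algebraMap R A b * v) = -(algebraMap R A b * v) := by
  rw [star_mul, hv, C.star_aM, neg_mul, ← C.comm]

theorem antisym_sq_nonsq {v : A} (hv : star v = -v) (hvu : IsUnit v)
    {e : R} (he : algebraMap R A e = v * v) : NSq R e := by
  intro f hf
  have hc := C.comm f v
  have hprod : (v - algebraMap R A f) * (v + algebraMap R A f) = algebraMap R A (e - f*f) := by
    calc (v - algebraMap R A f) * (v + algebraMap R A f)
        = v*v + v*(algebraMap R A f) - (algebraMap R A f)*v
            - (algebraMap R A f)*(algebraMap R A f) := by noncomm_ring
      _ = v*v - (algebraMap R A f)*(algebraMap R A f) := by rw [hc]; abel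
      _ = algebraMap R A (e - f*f) := by rw [map_sub, map_mul, he]
  have hmem : (v - algebraMap R A f) * (v + algebraMap R A f) ∈ nonunits A := by
    rw [hprod]; exact C.nonunits_aM hf
  have hsplit : v - algebraMap R A f ∈ nonunits A ∨ v + algebraMap R A f ∈ nonunits A := by
    by_cases h1 : IsUnit (v - algebraMap R A f)
    · exact Or.inr (fun h2 => hmem (h1.mul h2))
    · exact Or.inl h1
  rcases hsplit with h | h
  · exact C.antisym_not_res hv hvu f h
  · refine C.antisym_not_res hv hvu (-f) ?_
    rwa [map_neg, sub_neg_eq_add]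

theorem prod_formula {t : A} {d : R} (hdt : algebraMap R A d = t*t) (p q p' q' : R) :
    (algebraMap R A p + algebraMap R A q * t) * (algebraMap R A p' + algebraMap R A q' * t)
      = algebraMap R A (p*p' + q*q'*d) + algebraMap R A (p*q' + q*p') * t := by
  have h1 : t * algebraMap R A p' = algebraMap R A p' * t := (C.comm _ _).symm
  have h2 : (algebraMap R A q * t) * (algebraMap R A q' * t)
      = algebraMap R A (q*q') * (t*t) := C.mulmul _ _ _ _
  calc (algebraMap R A p + algebraMap R A q * t) * (algebraMap R A p' + algebraMap R A q' * t)
      = algebraMap R A p * algebraMap R A p' + algebraMap R A p * (algebraMap R A q' * t)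
        + algebraMap R A q * (t * algebraMap R A p')
        + (algebraMap R A q * t) * (algebraMap R A q' * t) := by noncomm_ring
    _ = algebraMap R A (p*p') + algebraMap R A (p*q') * t + algebraMap R A (q*p') * t
        + algebraMap R A (q*q'*d) := by
        rw [h1, h2, ← hdt, ← map_mul, ← map_mul, ← mul_assoc, ← map_mul, ← mul_assoc, ← map_mul]
    _ = algebraMap R A (p*p' + q*q'*d) + algebraMap R A (p*q' + q*p') * t := by
        rw [map_add, map_add, add_mul]; abel

theorem quat_contr
    [Finite (IsLocalRing.ResidueField R)]
    (hodd : Odd (Nat.card (IsLocalRing.ResidueField R)))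
    (hsq : ∀ x ∈ IsLocalRing.maximalIdeal R,
      ∃ y ∈ IsLocalRing.maximalIdeal R, (1 + y) ^ 2 = 1 + x)
    {t x : A} (ht : star t = -t) (htu : IsUnit t)
    (hx : star x = -x) (hxu : IsUnit x) (hanti : t * x = -(x * t))
    {d : R} (hdt : algebraMap R A d = t * t) (hdx : algebraMap R A d = x * x) :
    False := by
  have hanti' : x * t = -(t * x) := by rw [hanti, neg_neg]
  have hdu : IsUnit d := C.isUnit_of_aM (by rw [hdt]; exact htu.mul htu)
  have hdns : NSq R d := C.antisym_sq_nonsq ht htu hdt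
  obtain ⟨di, hdi⟩ := hdu.exists_right_inv
  have hdiu : IsUnit di := IsUnit.of_mul_eq_one (a := di) d (by rw [mul_comm]; exact hdi)
  set y : A := algebraMap R A di * (t * x) with hy
  have hyu : IsUnit y := (hdiu.map (algebraMap R A)).mul (htu.mul hxu)
  have hysym : star y = -y := by
    rw [hy, star_mul, star_mul, ht, hx, C.star_aM, neg_mul_neg, ← C.comm, hanti', mul_neg]
  have hy2 : y * y = -(1:A) := by
    have e1 : y * y = algebraMap R A (di*di) * ((t*x)*(t*x)) := C.mulmul di di (t*x) (t*x)
    have e2 : (t*x)*(t*x) = -(algebraMap R A (d*d)) := by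
      calc (t*x)*(t*x) = t*(x*t)*x := by noncomm_ring
        _ = t*(-(t*x))*x := by rw [hanti']
        _ = -((t*t)*(x*x)) := by noncomm_ring
        _ = -(algebraMap R A d * algebraMap R A d) := by rw [← hdt, ← hdx]
        _ = -(algebraMap R A (d*d)) := by rw [map_mul]
    rw [e1, e2, mul_neg, ← map_mul]
    have e3 : di*di*(d*d) = (d*di)*(d*di) := by ring
    rw [e3, hdi, mul_one, map_one]
  have hty : t * y = -(y * t) := by
    have e1 : t * y = algebraMap R A di * ((t*t)*x) := by
      rw [hy, ← mul_assoc, ← C.comm, mul_assoc, ← mul_assoc t t x]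
    have e2 : y * t = -(algebraMap R A di * ((t*t)*x)) := by
      rw [hy, mul_assoc]
      have e3 : (t*x)*t = -((t*t)*x) := by
        calc (t*x)*t = t*(x*t) := by rw [mul_assoc]
          _ = t*(-(t*x)) := by rw [hanti']
          _ = -((t*t)*x) := by noncomm_ring
      rw [e3, mul_neg]
    rw [e1, e2, neg_neg]
  have hxy : x * y = -(y * x) := by
    have e1 : x * y = -(algebraMap R A di * (t*(x*x))) := by
      rw [hy, ← mul_assoc, ← C.comm, mul_assoc]
      have e3 : x*(t*x) = -(t*(x*x)) := by
        calc x*(t*x) = (x*t)*x := by rw [mul_assoc]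
          _ = (-(t*x))*x := by rw [hanti']
          _ = -(t*(x*x)) := by noncomm_ring
      rw [e3, mul_neg]
    have e2 : y * x = algebraMap R A di * (t*(x*x)) := by
      rw [hy, mul_assoc, mul_assoc]
    rw [e1, e2]
  -- the element i with i*i = -1
  rcases neg_one_cases hodd hsq hdns hdu with ⟨ζ, hζ⟩ | ⟨ζ, hζ⟩
  · -- i = aM ζ central
    have hζu : IsUnit ζ := IsUnit.of_mul_eq_one (a := ζ) (-ζ) (by linear_combination -hζ)
    have hii : algebraMap R A ζ * algebraMap R A ζ = -1 := by
      rw [← map_mul, hζ, map_neg, map_one]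
    have h0 : (y - algebraMap R A ζ) * (y + algebraMap R A ζ) = 0 := by
      have hci : algebraMap R A ζ * y = y * algebraMap R A ζ := C.comm ζ y
      calc (y - algebraMap R A ζ) * (y + algebraMap R A ζ)
          = y*y + y*algebraMap R A ζ - algebraMap R A ζ*y
            - algebraMap R A ζ*algebraMap R A ζ := by noncomm_ring
        _ = y*y - algebraMap R A ζ*algebraMap R A ζ := by rw [hci]; abel
        _ = 0 := by rw [hy2, hii]; abel
    have hsplit := auxNC_zero_prod h0
    rcases hsplit with hmem | hmem
    · have h1 : t*(y - algebraMap R A ζ) + (y - algebraMap R A ζ)*t ∈ nonunits A :=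
        auxNC_nonunits_add (auxNC_mul_left t hmem) (auxNC_mul_right t hmem)
      have e : t*(y - algebraMap R A ζ) + (y - algebraMap R A ζ)*t
          = (t*y + y*t) - 2*(algebraMap R A ζ * t) := by
        have hc : t*(algebraMap R A ζ) = algebraMap R A ζ * t := (C.comm ζ t).symm
        calc t*(y - algebraMap R A ζ) + (y - algebraMap R A ζ)*t
            = (t*y + y*t) - (t*algebraMap R A ζ + algebraMap R A ζ*t) := by noncomm_ring
          _ = (t*y + y*t) - 2*(algebraMap R A ζ * t) := by rw [hc, two_mul]
      rw [e, hty, neg_add_cancel, zero_sub] at h1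
      have h2 := auxNC_neg h1
      rw [neg_neg] at h2
      have h3 := C.two_cancel h2
      exact (auxNC_unit_mul_mem (hζu.map (algebraMap R A)) h3) htu
    · have h1 : t*(y + algebraMap R A ζ) + (y + algebraMap R A ζ)*t ∈ nonunits A :=
        auxNC_nonunits_add (auxNC_mul_left t hmem) (auxNC_mul_right t hmem)
      have e : t*(y + algebraMap R A ζ) + (y + algebraMap R A ζ)*t
          = (t*y + y*t) + 2*(algebraMap R A ζ * t) := by
        have hc : t*(algebraMap R A ζ) = algebraMap R A ζ * t := (C.comm ζ t).symm
        calc t*(y + algebraMap R A ζ) + (y + algebraMap R A ζ)*t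
            = (t*y + y*t) + (t*algebraMap R A ζ + algebraMap R A ζ*t) := by noncomm_ring
          _ = (t*y + y*t) + 2*(algebraMap R A ζ * t) := by rw [hc, two_mul]
      rw [e, hty, neg_add_cancel, zero_add] at h1
      have h3 := C.two_cancel h1
      exact (auxNC_unit_mul_mem (hζu.map (algebraMap R A)) h3) htu
  · -- i = aM ζ * t, with d*(ζ*ζ) = -1
    have hζu : IsUnit ζ := IsUnit.of_mul_eq_one (a := ζ) (-(d*ζ)) (by linear_combination -hζ)
    set i : A := algebraMap R A ζ * t with hidef
    have hiu : IsUnit i := (hζu.map (algebraMap R A)).mul htu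
    have hisym : star i = -i := C.star_smul_antisym ht ζ
    have hii : i * i = -(1:A) := by
      rw [hidef, C.mulmul, ← hdt, ← map_mul]
      have : ζ*ζ*d = d*(ζ*ζ) := by ring
      rw [this, hζ, map_neg, map_one]
    have hyi : i * y = -(y * i) := by
      have e1 : i * y = algebraMap R A ζ * (t * y) := by rw [hidef, mul_assoc]
      have e2 : y * i = algebraMap R A ζ * (y * t) := by
        rw [hidef, ← mul_assoc, ← C.comm, mul_assoc]
      rw [e1, e2, hty, mul_neg]
    -- find α β with α² + β² = -1
    obtain ⟨x0, y0, hx0⟩ := sum_sq (R := R) hodd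
    have hmem1 : (x0*x0 + y0*y0) - (-1) ∈ IsLocalRing.maximalIdeal R := by
      rwa [sub_neg_eq_add]
    obtain ⟨z, hzu, hz⟩ := exact_scale hsq (x0*x0 + y0*y0) (-1) (IsUnit.neg isUnit_one) hmem1
    set α := z*x0 with hα
    set β := z*y0 with hβ
    have hαβ : α*α + β*β = -1 := by rw [hα, hβ]; linear_combination hz
    -- the element g
    set I : A := algebraMap R A α * i with hI
    set J : A := algebraMap R A β * (y*i) with hJ
    have hI2 : I * I = -(algebraMap R A (α*α)) := by
      rw [hI, C.mulmul, hii, mul_neg, mul_one]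
    have hJ2 : J * J = -(algebraMap R A (β*β)) := by
      rw [hJ, C.mulmul]
      have e1 : (y*i)*(y*i) = -(1:A) := by
        calc (y*i)*(y*i) = y*(i*y)*i := by noncomm_ring
          _ = y*(-(y*i))*i := by rw [hyi]
          _ = -((y*y)*(i*i)) := by noncomm_ring
          _ = -(1:A) := by rw [hy2, hii]; simp
      rw [e1, mul_neg, mul_one]
    have hIJ : I * J = -(J * I) := by
      have e1 : I * J = algebraMap R A (α*β) * (i*(y*i)) := C.mulmul _ _ _ _
      have e2 : J * I = algebraMap R A (β*α) * ((y*i)*i) := C.mulmul _ _ _ _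
      have e3 : i*(y*i) = -((y*i)*i) := by
        rw [← mul_assoc, hyi, neg_mul]
      rw [e1, e2, e3, mul_neg, mul_comm α β]
    have hg2 : (I + J) * (I + J) = 1 := by
      calc (I + J) * (I + J) = I*I + J*J + (I*J + J*I) := by noncomm_ring
        _ = I*I + J*J := by rw [hIJ]; abel
        _ = -(algebraMap R A (α*α + β*β)) := by rw [hI2, hJ2, map_add]; abel
        _ = 1 := by rw [hαβ, map_neg, map_one, neg_neg]
    have h0 : ((I + J) - 1) * ((I + J) + 1) = 0 := by
      calc ((I + J) - 1) * ((I + J) + 1) = (I+J)*(I+J) - 1 := by noncomm_ring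
        _ = 0 := by rw [hg2]; abel
    -- conjugation by t
    have hti : t * i = i * t := by
      rw [hidef, ← mul_assoc, ← C.comm]
    have htI : t * I = I * t := by
      rw [hI, ← mul_assoc, ← C.comm, mul_assoc, hti, ← mul_assoc]
    have htJ : t * J = -(J * t) := by
      have e1 : t*(y*i) = -((y*i)*t) := by
        calc t*(y*i) = (t*y)*i := by rw [← mul_assoc]
          _ = (-(y*t))*i := by rw [hty]
          _ = -(y*(t*i)) := by noncomm_ring
          _ = -(y*(i*t)) := by rw [hti]
          _ = -((y*i)*t) := by noncomm_ring
      rw [hJ, ← mul_assoc t, ← C.comm, mul_assoc, e1, mul_neg, mul_assoc]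
      rw [← mul_assoc y i t, ← mul_assoc]
    obtain ⟨ε, hεu, hεmem⟩ : ∃ ε : R, IsUnit ε ∧ (I + J) - algebraMap R A ε ∈ nonunits A := by
      rcases auxNC_zero_prod h0 with hmem | hmem
      · exact ⟨1, isUnit_one, by rwa [map_one]⟩
      · refine ⟨-1, (isUnit_one).neg, ?_⟩
        rwa [map_neg, map_one, sub_neg_eq_add]
    have hconj : (I - J) - algebraMap R A ε ∈ nonunits A := by
      have h1 : t * ((I + J) - algebraMap R A ε) ∈ nonunits A := auxNC_mul_left t hεmem
      have e : t * ((I + J) - algebraMap R A ε) = ((I - J) - algebraMap R A ε) * t := by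
        have hc : t * algebraMap R A ε = algebraMap R A ε * t := (C.comm ε t).symm
        calc t * ((I + J) - algebraMap R A ε)
            = t*I + t*J - t*algebraMap R A ε := by noncomm_ring
          _ = I*t - J*t - algebraMap R A ε*t := by rw [htI, htJ, hc]; abel
          _ = ((I - J) - algebraMap R A ε) * t := by noncomm_ring
      rw [e] at h1
      exact auxNC_mul_unit_mem htu h1
    -- 2J ∈ nonunits, hence β ∈ m
    have h2J : 2*J ∈ nonunits A := by
      have := auxNC_sub hεmem hconj
      have e : ((I + J) - algebraMap R A ε) - ((I - J) - algebraMap R A ε) = 2*J := by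
        rw [two_mul]; abel
      rwa [e] at this
    have hJm : J ∈ nonunits A := C.two_cancel h2J
    have hβm : β ∈ IsLocalRing.maximalIdeal R := by
      apply C.aM_nonunits
      have hyi_u : IsUnit (y*i) := hyu.mul hiu
      exact fun hcon => hJm (by rw [hJ]; exact hcon.mul hyi_u)
    -- 2I - 2ε ∈ nonunits
    have h2I : 2*(I - algebraMap R A ε) ∈ nonunits A := by
      have := auxNC_nonunits_add hεmem hconj
      have e : ((I + J) - algebraMap R A ε) + ((I - J) - algebraMap R A ε)
          = 2*(I - algebraMap R A ε) := by rw [two_mul]; abel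
      rwa [e] at this
    have hIε : I - algebraMap R A ε ∈ nonunits A := C.two_cancel h2I
    by_cases hαu : IsUnit α
    · obtain ⟨αi, hαi⟩ := hαu.exists_right_inv
      have h1 : algebraMap R A αi * (I - algebraMap R A ε) ∈ nonunits A :=
        auxNC_mul_left _ hIε
      have e : algebraMap R A αi * (I - algebraMap R A ε) = i - algebraMap R A (αi*ε) := by
        rw [hI, mul_sub, ← mul_assoc, ← map_mul, mul_comm αi α, hαi, map_one, one_mul, ← map_mul]
      rw [e] at h1
      exact C.antisym_not_res hisym hiu (αi*ε) h1
    · have hαm : α ∈ IsLocalRing.maximalIdeal R := hαu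
      have : (-1 : R) ∈ IsLocalRing.maximalIdeal R := by
        rw [← hαβ]
        exact Ideal.add_mem _ (Ideal.mul_mem_right _ _ hαm) (Ideal.mul_mem_right _ _ hβm)
      have h1 : (1:R) ∈ IsLocalRing.maximalIdeal R := by
        have := Submodule.neg_mem _ this
        rwa [neg_neg] at this
      exact h1 isUnit_one


theorem key
    [Finite (IsLocalRing.ResidueField R)]
    (hodd : Odd (Nat.card (IsLocalRing.ResidueField R)))
    (hsq : ∀ x ∈ IsLocalRing.maximalIdeal R,
      ∃ y ∈ IsLocalRing.maximalIdeal R, (1 + y) ^ 2 = 1 + x)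
    {t : A} (ht : star t = -t) (htu : IsUnit t)
    {d : R} (hdt : algebraMap R A d = t*t)
    {v : A} (hv : star v = -v) :
    ∃ s : R, v - algebraMap R A s * t ∈ nonunits A := by
  have hdu : IsUnit d := C.isUnit_of_aM (by rw [hdt]; exact htu.mul htu)
  have hdns : NSq R d := C.antisym_sq_nonsq ht htu hdt
  have hsymc : star (t*v + v*t) = t*v + v*t := by
    rw [star_add, star_mul, star_mul, ht, hv, neg_mul_neg, neg_mul_neg, add_comm]
  obtain ⟨γ, hγ⟩ := (C.hfix _).mp hsymc
  obtain ⟨i2, hi2⟩ := (C.isUnit_two.mul hdu).exists_right_inv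
  set lam := γ * i2 with hlam
  set w := v - algebraMap R A lam * t with hw
  have hstlam : star (algebraMap R A lam * t) = -(algebraMap R A lam * t) :=
    C.star_smul_antisym ht lam
  have hws : star w = -w := by
    rw [hw, star_sub, hv, hstlam, sub_neg_eq_add]
    abel
  have hzero : t*w + w*t = 0 := by
    have e1 : t*(algebraMap R A lam * t) = algebraMap R A lam * (t*t) := by
      rw [← mul_assoc, ← C.comm, mul_assoc]
    have e2 : (algebraMap R A lam * t)*t = algebraMap R A lam * (t*t) := mul_assoc _ _ _
    have e4 : (2:A) * (algebraMap R A lam * algebraMap R A d)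
        = algebraMap R A (2*(lam*d)) := by
      rw [← map_mul, ← map_ofNat (algebraMap R A) 2, ← map_mul]
    calc t*w + w*t
        = (t*v + v*t) - (t*(algebraMap R A lam * t) + (algebraMap R A lam * t)*t) := by
          rw [hw]; noncomm_ring
      _ = algebraMap R A γ - 2*(algebraMap R A lam * (t*t)) := by
          rw [hγ, e1, e2, two_mul]
      _ = algebraMap R A γ - algebraMap R A (2*(lam*d)) := by rw [← hdt, e4]
      _ = algebraMap R A (γ - 2*(lam*d)) := by rw [map_sub]
      _ = 0 := by
          have : γ - 2*(lam*d) = 0 := by rw [hlam]; linear_combination (-γ)*hi2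
          rw [this, map_zero]
  have hanti : t*w = -(w*t) := by
    have := hzero
    rw [add_eq_zero_iff_eq_neg] at this
    exact this
  by_cases hwu : IsUnit w
  · exfalso
    obtain ⟨e, he⟩ := C.sym_sq hws
    have heu : IsUnit e := C.isUnit_of_aM (by rw [he]; exact hwu.mul hwu)
    have hens : NSq R e := C.antisym_sq_nonsq hws hwu he
    obtain ⟨μ, hμu, hμ⟩ := nonsq_ratio hodd hdns hens hdu heu
    have hmem : μ*μ*e - d ∈ IsLocalRing.maximalIdeal R := by
      have := Submodule.neg_mem _ hμ
      rwa [neg_sub] at this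
    obtain ⟨z, hzu, hz⟩ := exact_scale hsq (μ*μ*e) d hdu hmem
    have hνu : IsUnit (z*μ) := hzu.mul hμu
    have hXs : star (algebraMap R A (z*μ) * w) = -(algebraMap R A (z*μ) * w) :=
      C.star_smul_antisym hws (z*μ)
    have hXu : IsUnit (algebraMap R A (z*μ) * w) := (hνu.map (algebraMap R A)).mul hwu
    have hanti2 : t * (algebraMap R A (z*μ) * w) = -((algebraMap R A (z*μ) * w) * t) := by
      calc t * (algebraMap R A (z*μ) * w) = algebraMap R A (z*μ) * (t*w) := by
            rw [← mul_assoc, ← C.comm, mul_assoc]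
        _ = -((algebraMap R A (z*μ) * w) * t) := by rw [hanti, mul_neg, mul_assoc]
    have hdX : algebraMap R A d = (algebraMap R A (z*μ) * w) * (algebraMap R A (z*μ) * w) := by
      rw [C.mulmul, ← he, ← map_mul]
      congr 1
      linear_combination -hz
    exact C.quat_contr hodd hsq ht htu hXs hXu hanti2 hdt hdX
  · exact ⟨lam, by rw [← hw]; exact hwu⟩

theorem case2_norm
    [Finite (IsLocalRing.ResidueField R)]
    (hodd : Odd (Nat.card (IsLocalRing.ResidueField R)))
    (hsq : ∀ x ∈ IsLocalRing.maximalIdeal R,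
      ∃ y ∈ IsLocalRing.maximalIdeal R, (1 + y) ^ 2 = 1 + x)
    {t : A} (ht : star t = -t) (htu : IsUnit t)
    {d : R} (hdt : algebraMap R A d = t*t)
    (r : R) (hru : IsUnit r) :
    ∃ a : A, IsUnit a ∧ a * star a = algebraMap R A r := by
  have hdu : IsUnit d := C.isUnit_of_aM (by rw [hdt]; exact htu.mul htu)
  obtain ⟨r0, s0, hr0⟩ := solve_norm hodd hdu r
  have hmem : (r0*r0 - d*(s0*s0)) - r ∈ IsLocalRing.maximalIdeal R := hr0
  obtain ⟨z, hzu, hz⟩ := exact_scale hsq _ r hru hmem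
  set α := z*r0 with hα
  set β := z*s0 with hβ
  have hαβ : α*α + β*(-β)*d = r := by rw [hα, hβ]; linear_combination hz
  have hαβ2 : α*α + (-β)*β*d = r := by rw [hα, hβ]; linear_combination hz
  set a : A := algebraMap R A α + algebraMap R A β * t with ha
  have hstar : star a = algebraMap R A α + algebraMap R A (-β) * t := by
    rw [ha, star_add, C.star_aM, C.star_smul_antisym ht β, map_neg, neg_mul]
  have haa : a * star a = algebraMap R A r := by
    rw [ha, hstar, C.prod_formula hdt]
    have e1 : α*(-β) + β*α = 0 := by ring
    rw [e1, hαβ, map_zero, zero_mul, add_zero]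
  have hsa : star a * a = algebraMap R A r := by
    rw [ha, hstar, C.prod_formula hdt]
    have e1 : α*β + (-β)*α = 0 := by ring
    rw [e1, hαβ2, map_zero, zero_mul, add_zero]
  obtain ⟨ri, hri⟩ := hru.exists_right_inv
  refine ⟨a, ⟨⟨a, star a * algebraMap R A ri, ?_, ?_⟩, rfl⟩, haa⟩
  · rw [← mul_assoc, haa, ← map_mul, hri, map_one]
  · rw [mul_assoc, C.comm ri a, ← mul_assoc, hsa, ← map_mul, hri, map_one]

end PCtx

open MulOpposite

/-- Proposition 3.2 (Prop. 45): with `R` the (central) fixed ring of the involution,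
residue field `F_q` of odd order and squaring surjective on `1 + 𝔪`:
if the induced involution on `A/𝔯` is the identity then the norm map
`Q : A* → R*`, `a ↦ a a*`, is not surjective and `A/𝔯 ≅ F_q` (i.e. `A = R + 𝔯`);
otherwise `A/𝔯` is commutative, `Q` is surjective and `A/𝔯 ≅ F_{q²}`
(a quadratic extension of the residue field of `R`). -/
theorem stmt_6 {A : Type*} [Ring A] [StarRing A] [IsLocalRing A]
    (hcent : ∀ a : A, star a = a → a ∈ Set.center A)
    (h2 : IsUnit (2 : A))
    (R : Type*) [CommRing R] [IsLocalRing R] [Algebra R A]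
    (hinj : Function.Injective (algebraMap R A))
    (hfix : ∀ a : A, star a = a ↔ a ∈ Set.range (algebraMap R A))
    [Finite (IsLocalRing.ResidueField R)]
    (hodd : Odd (Nat.card (IsLocalRing.ResidueField R)))
    (hsq : ∀ x ∈ IsLocalRing.maximalIdeal R,
      ∃ y ∈ IsLocalRing.maximalIdeal R, (1 + y) ^ 2 = 1 + x) :
    ((∀ a : A, a - star a ∈ nonunits A) →
      (¬ ∀ r : R, IsUnit r → ∃ a : A, IsUnit a ∧ a * star a = algebraMap R A r) ∧
      (∀ a : A, ∃ r : R, a - algebraMap R A r ∈ nonunits A)) ∧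
    ((¬ ∀ a : A, a - star a ∈ nonunits A) →
      (∀ a b : A, a * b - b * a ∈ nonunits A) ∧
      (∀ r : R, IsUnit r → ∃ a : A, IsUnit a ∧ a * star a = algebraMap R A r) ∧
      (∃ θ : A, (¬ ∃ r : R, θ - algebraMap R A r ∈ nonunits A) ∧
        ∀ a : A, ∃ r s : R,
          a - (algebraMap R A r + algebraMap R A s * θ) ∈ nonunits A)) := by
  have C : PCtx A R := ⟨hcent, h2, hinj, hfix⟩
  constructor
  · intro hid
    have hanti_mem : ∀ t : A, star t = -t → t ∈ nonunits A := by
      intro t hts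
      have h1 := hid t
      rw [hts, sub_neg_eq_add, ← two_mul] at h1
      exact C.two_cancel h1
    constructor
    · intro hsur
      obtain ⟨r, hru, hrns⟩ := nonsq_exists hodd
      obtain ⟨a, hau, ha⟩ := hsur r hru
      obtain ⟨s, t, hts, hat⟩ := C.decomp a
      have htm : t ∈ nonunits A := hanti_mem t hts
      obtain ⟨e, he⟩ := C.sym_sq hts
      have hem : e ∈ IsLocalRing.maximalIdeal R := C.aM_nonunits (by
        rw [he]; exact auxNC_mul_right t htm)
      have hstar : star a = algebraMap R A s - t := by
        rw [hat, star_add, C.star_aM, hts, ← sub_eq_add_neg]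
      have hcomp : a * star a = algebraMap R A (s*s - e) := by
        rw [hstar, hat]
        have hc := C.comm s t
        calc (algebraMap R A s + t) * (algebraMap R A s - t)
            = algebraMap R A s * algebraMap R A s + t * algebraMap R A s
              - algebraMap R A s * t - t*t := by noncomm_ring
          _ = algebraMap R A s * algebraMap R A s - t*t := by rw [← hc]; abel
          _ = algebraMap R A (s*s - e) := by rw [map_sub, map_mul, he]
      have hre : r = s*s - e := C.hinj (by rw [← ha, hcomp])
      refine hrns s ?_
      have e2 : r - s*s = -e := by rw [hre]; ring
      rw [e2]
      exact Submodule.neg_mem _ hem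
    · intro a
      obtain ⟨r, t, hts, hat⟩ := C.decomp a
      refine ⟨r, ?_⟩
      rw [hat, add_sub_cancel_left]
      exact hanti_mem t hts
  · intro hex
    rw [not_forall] at hex
    obtain ⟨a₀, ha₀⟩ := hex
    have hvu : IsUnit (a₀ - star a₀) := by
      by_contra hc
      exact ha₀ hc
    set t := a₀ - star a₀ with htdef
    have hts : star t = -t := by rw [htdef, star_sub, star_star, neg_sub]
    obtain ⟨d, hdt⟩ := C.sym_sq hts
    have hres : ∀ a : A, ∃ r s : R,
        a - (algebraMap R A r + algebraMap R A s * t) ∈ nonunits A := by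
      intro a
      obtain ⟨r, v, hvs, hav⟩ := C.decomp a
      obtain ⟨s, hs⟩ := C.key hodd hsq hts hvu hdt hvs
      refine ⟨r, s, ?_⟩
      have e : a - (algebraMap R A r + algebraMap R A s * t)
          = v - algebraMap R A s * t := by rw [hav]; abel
      rw [e]; exact hs
    refine ⟨?_, ?_, t, ?_, hres⟩
    · intro a b
      obtain ⟨r1, s1, h1⟩ := hres a
      obtain ⟨r2, s2, h2⟩ := hres b
      set x := algebraMap R A r1 + algebraMap R A s1 * t with hx
      set y := algebraMap R A r2 + algebraMap R A s2 * t with hy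
      have hxy : x*y = y*x := by
        rw [hx, hy, C.prod_formula hdt, C.prod_formula hdt,
          show r1*r2 + s1*s2*d = r2*r1 + s2*s1*d from by ring,
          show r1*s2 + s1*r2 = r2*s1 + s2*r1 from by ring]
      have hident : a*b - b*a
          = ((a - x)*b + x*(b - y)) - ((b - y)*a + y*(a - x)) + (x*y - y*x) := by
        noncomm_ring
      rw [hident, hxy, sub_self, add_zero]
      exact auxNC_sub (auxNC_nonunits_add (auxNC_mul_right b h1) (auxNC_mul_left x h2))
        (auxNC_nonunits_add (auxNC_mul_right a h2) (auxNC_mul_left y h1))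
    · intro r hru
      exact C.case2_norm hodd hsq hts hvu hdt r hru
    · rintro ⟨r, hr⟩
      exact C.antisym_not_res hts hvu r hr
end
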